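/- arXiv:2602.09863 — 2 statements merged into one kernel-verified Lean document; each statement's English description precedes it below -/
import Mathlib

section
/- Let m ≥ 2 and let c_small, a, c be nonnegative integers with c ≥ 2·m!·a + c_small. Let T be a tournament that is A_m-free and such that every subtournament T' of T with ω⃗(T') ≥ c_small contains a copy of A_{m−1}. Let Q = (Q_1, …, Q_r) be a (c, a)-near-bag-chain in T. Then ω⃗(⋃_{i=1}^r Q_i) ≤ 4·m·c. -/
/-- A tournament on a vertex type `V`: an orientation of the complete graph. -/
structure Tournament (V : Type) where
  arc : V → V → Prop
  loopless : ∀ v, ¬ arc v v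
  anti : ∀ u v, u ≠ v → (arc u v ↔ ¬ arc v u)

namespace Tournament

variable {V W : Type}

/-- The backedge graph of `T` with respect to the total ordering of `V` induced by
an injective map `f : V → ℕ`: `u` and `v` are adjacent iff the arc between them
goes backwards in the ordering. -/
def backedge (T : Tournament V) (f : V → ℕ) : SimpleGraph V where
  Adj u v := (f u < f v ∧ T.arc v u) ∨ (f v < f u ∧ T.arc u v)
  symm := ⟨fun u v h => h.symm⟩
  loopless := ⟨by
    intro v h
    rcases h with ⟨h, _⟩ | ⟨h, _⟩ <;> exact lt_irrefl _ h⟩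

/-- The clique number of a tournament: the minimum over all orderings of the
clique number of the corresponding backedge graph. -/
noncomputable def cliqueNum (T : Tournament V) : ℕ :=
  sInf {n | ∃ f : V → ℕ, Function.Injective f ∧ (T.backedge f).cliqueNum = n}

/-- The subtournament induced on a set `X` of vertices. -/
def restrict (T : Tournament V) (X : Set V) : Tournament X where
  arc u v := T.arc u.1 v.1
  loopless v := T.loopless v.1
  anti u v h := T.anti u.1 v.1 (fun e => h (Subtype.ext e))

/-- `ω⃗(X)`: the clique number of the subtournament induced on `X`. -/
noncomputable def cliqueNumOn (T : Tournament V) (X : Set V) : ℕ :=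
  (T.restrict X).cliqueNum

/-- Out-neighbourhood. -/
def outN (T : Tournament V) (v : V) : Set V := {w | T.arc v w}

/-- In-neighbourhood. -/
def inN (T : Tournament V) (v : V) : Set V := {w | T.arc w v}

/-- `T.HasCopy H`: some set of vertices of `T` induces a subtournament isomorphic to `H`. -/
def HasCopy (T : Tournament V) (H : Tournament W) : Prop :=
  ∃ f : W → V, Function.Injective f ∧ ∀ u v : W, H.arc u v ↔ T.arc (f u) (f v)

end Tournament

/-- Vertex type of the tournament `D n` (`D 0` is empty, `D 1` a single vertex). -/
def DType : ℕ → Type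
  | 0 => Empty
  | n+1 => (DType n) ⊕ ((DType n) ⊕ Unit)

/-- Arcs of `D n`: `D (n+1) = Δ(X, Y, v)` with `X ⇒ Y`, `Y ⇒ v`, `v ⇒ X`,
where `X`, `Y` are copies of `D n` and `v` one extra vertex. -/
def Darc : (n : ℕ) → DType n → DType n → Prop
  | 0, x, _ => x.elim
  | n+1, Sum.inl a, Sum.inl b => Darc n a b
  | _+1, Sum.inl _, Sum.inr (Sum.inl _) => True
  | _+1, Sum.inl _, Sum.inr (Sum.inr _) => False
  | _+1, Sum.inr (Sum.inl _), Sum.inl _ => False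
  | n+1, Sum.inr (Sum.inl a), Sum.inr (Sum.inl b) => Darc n a b
  | _+1, Sum.inr (Sum.inl _), Sum.inr (Sum.inr _) => True
  | _+1, Sum.inr (Sum.inr _), Sum.inl _ => True
  | _+1, Sum.inr (Sum.inr _), Sum.inr _ => False

theorem Darc_irrefl (n : ℕ) : ∀ x : DType n, ¬ Darc n x x := by
  induction n with
  | zero => intro x; exact x.elim
  | succ n ih =>
    intro x
    match x with
    | Sum.inl a => simpa [Darc] using ih a
    | Sum.inr (Sum.inl a) => simpa [Darc] using ih a
    | Sum.inr (Sum.inr u) => simp [Darc]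

theorem Darc_anti (n : ℕ) : ∀ x y : DType n, x ≠ y → (Darc n x y ↔ ¬ Darc n y x) := by
  induction n with
  | zero => intro x; exact x.elim
  | succ n ih =>
    intro x y hxy
    match x, y with
    | Sum.inl a, Sum.inl b =>
      have hab : a ≠ b := by intro h; exact hxy (by rw [h])
      simpa [Darc] using ih a b hab
    | Sum.inl a, Sum.inr (Sum.inl b) => simp [Darc]
    | Sum.inl a, Sum.inr (Sum.inr u) => simp [Darc]
    | Sum.inr (Sum.inl a), Sum.inl b => simp [Darc]
    | Sum.inr (Sum.inl a), Sum.inr (Sum.inl b) =>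
      have hab : a ≠ b := by intro h; exact hxy (by rw [h])
      simpa [Darc] using ih a b hab
    | Sum.inr (Sum.inl a), Sum.inr (Sum.inr u) => simp [Darc]
    | Sum.inr (Sum.inr u), Sum.inl b => simp [Darc]
    | Sum.inr (Sum.inr u), Sum.inr (Sum.inl b) => simp [Darc]
    | Sum.inr (Sum.inr u), Sum.inr (Sum.inr w) =>
      exact absurd (by cases u; cases w; rfl) hxy

/-- The tournament `D n` (indexed so that `D 1` is a single vertex, and
`D (n+1)` is `Δ(D n, D n, v)`). -/
def Dtour (n : ℕ) : Tournament (DType n) where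
  arc := Darc n
  loopless := Darc_irrefl n
  anti := Darc_anti n

/-- Vertex type of the tournament `A n` (`A 0` is empty, `A 1` a single vertex):
`A (n+1)` consists of `n` copies of `A n` together with `n+1` extra vertices. -/
def AType : ℕ → Type
  | 0 => Empty
  | n+1 => (Fin n × AType n) ⊕ Fin (n+1)

/-- Arcs of `A (n+1)` (0-indexed version of the definition of Kim and Kim):
`inl (i, a)` is the vertex `a` of the copy `T_i` of `A n`, and `inr i` is the
extra vertex `v_i`.  We have `v_j ⇒ v_i` for `i < j`; `T_i ⇒ T_j` for `i < j`;
`v_i ⇒ T_j` for `i ≤ j`; and `T_j ⇒ v_i` for `j < i`. -/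
def Aarc : (n : ℕ) → AType n → AType n → Prop
  | 0, x, _ => x.elim
  | n+1, Sum.inl (i, a), Sum.inl (j, b) => (i : ℕ) < (j : ℕ) ∨ (i = j ∧ Aarc n a b)
  | _+1, Sum.inl (j, _), Sum.inr i => (j : ℕ) < (i : ℕ)
  | _+1, Sum.inr i, Sum.inl (j, _) => (i : ℕ) ≤ (j : ℕ)
  | _+1, Sum.inr i, Sum.inr j => (j : ℕ) < (i : ℕ)

theorem Aarc_irrefl (n : ℕ) : ∀ x : AType n, ¬ Aarc n x x := by
  induction n with
  | zero => intro x; exact x.elim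
  | succ n ih =>
    intro x
    match x with
    | Sum.inl (i, a) =>
      simp only [Aarc, lt_irrefl, false_or, not_and]
      intro _
      exact ih a
    | Sum.inr i => simp [Aarc]

theorem Aarc_anti (n : ℕ) : ∀ x y : AType n, x ≠ y → (Aarc n x y ↔ ¬ Aarc n y x) := by
  induction n with
  | zero => intro x; exact x.elim
  | succ n ih =>
    intro x y hxy
    match x, y with
    | Sum.inl (i, a), Sum.inl (j, b) =>
      rcases lt_trichotomy (i : ℕ) (j : ℕ) with h | h | h
      · have hne : j ≠ i := by intro e; rw [e] at h; exact lt_irrefl _ h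
        simp only [Aarc]
        constructor
        · intro _ hc
          rcases hc with hc | ⟨hc, _⟩
          · omega
          · exact hne hc
        · intro _; exact Or.inl h
      · have hij : i = j := Fin.ext h
        subst hij
        have hab : a ≠ b := by
          intro e; exact hxy (by rw [e])
        simpa [Aarc] using ih a b hab
      · have hne : i ≠ j := by intro e; rw [e] at h; exact lt_irrefl _ h
        simp only [Aarc]
        constructor
        · intro hc _
          rcases hc with hc | ⟨hc, _⟩
          · omega
          · exact hne hc
        · intro hc
          exfalso
          exact hc (Or.inl h)
    | Sum.inl (j, a), Sum.inr i => simp only [Aarc]; omega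
    | Sum.inr i, Sum.inl (j, a) => simp only [Aarc]; omega
    | Sum.inr i, Sum.inr j =>
      have hne : (i : ℕ) ≠ (j : ℕ) := fun e => hxy (by rw [Fin.ext e])
      simp only [Aarc]
      omega

/-- The tournament `A n` of Kim and Kim (indexed so that `A 1` is a single vertex). -/
def Atour (n : ℕ) : Tournament (AType n) where
  arc := Aarc n
  loopless := Aarc_irrefl n
  anti := Aarc_anti n
namespace Tournament

variable {V : Type}

/-- `M` contains a set `K` of `s` vertices such that every arc of `T[K]` is heavy,
as witnessed by a mountain (in the sense of the predicate `mtn`) inside `M`. -/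
def HasHeavyClique (T : Tournament V) (mtn : Set V → Prop) (s : ℕ) (M : Set V) : Prop :=
  ∃ K ⊆ M, K.ncard = s ∧ ∀ u ∈ K, ∀ v ∈ K, T.arc u v →
    ∃ M' ⊆ M, mtn M' ∧ (∀ m ∈ M', T.arc m u) ∧ (∀ m ∈ M', T.arc v m)

/-- `M` is minimal subject to containing an `(r,s)`-clique (heaviness being
witnessed by `r`-mountains, given by the predicate `mtn`, inside `M`). -/
def IsRSMtnAux (T : Tournament V) (mtn : Set V → Prop) (s : ℕ) (M : Set V) : Prop :=
  T.HasHeavyClique mtn s M ∧ ∀ M' ⊆ M, T.HasHeavyClique mtn s M' → M' = M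

/-- `T.IsMtn r M`: the set `M` induces an `r`-mountain.  A `1`-mountain is a single
vertex, and an `(r+1)`-mountain (for `r ≥ 1`) is an `(r, r+1)`-mountain, i.e. a minimal
set containing `r+1` vertices all of whose arcs are `r`-heavy within the set. -/
def IsMtn (T : Tournament V) : ℕ → Set V → Prop
  | 0 => fun _ => False
  | 1 => fun M => ∃ v, M = {v}
  | (r+2) => T.IsRSMtnAux (T.IsMtn (r+1)) (r+2)

/-- `T.IsRSMtn r s M`: the set `M` induces an `(r,s)`-mountain, i.e. a minimal set
containing an `(r,s)`-clique (with heaviness witnessed by `r`-mountains inside the set). -/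
def IsRSMtn (T : Tournament V) (r s : ℕ) (M : Set V) : Prop :=
  T.IsRSMtnAux (T.IsMtn r) s M

/-- A `(c,a)`-ω⃗-bag-chain: pairwise disjoint bags of clique number exactly `c`,
with all "wrong direction" neighbourhoods between bags of clique number less than `a`. -/
def IsBagChain (T : Tournament V) (c a : ℕ) {t : ℕ} (B : Fin t → Set V) : Prop :=
  (∀ i j : Fin t, i ≠ j → Disjoint (B i) (B j)) ∧
  (∀ i, T.cliqueNumOn (B i) = c) ∧
  (∀ i j : Fin t, i < j →
    (∀ v ∈ B j, T.cliqueNumOn (T.outN v ∩ B i) < a) ∧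
    (∀ w ∈ B i, T.cliqueNumOn (T.inN w ∩ B j) < a))

/-- A `(c,a)`-near-bag-chain: pairwise disjoint bags of clique number at most `c`,
such that for every vertex the "wrong direction" neighbours in the union of the other
bags have clique number at most `a`. -/
def IsNearBagChain (T : Tournament V) (c a : ℕ) {t : ℕ} (Q : Fin t → Set V) : Prop :=
  (∀ i j : Fin t, i ≠ j → Disjoint (Q i) (Q j)) ∧
  (∀ i, T.cliqueNumOn (Q i) ≤ c) ∧
  (∀ i : Fin t, ∀ v ∈ Q i,
    T.cliqueNumOn (T.inN v ∩ ⋃ j, ⋃ (_ : i < j), Q j) ≤ a ∧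
    T.cliqueNumOn (T.outN v ∩ ⋃ j, ⋃ (_ : j < i), Q j) ≤ a)

end Tournament

/-- The Ramsey number `R(x,y)`: the least `N` such that every graph on `N` vertices
contains a clique of size `x` or an independent set of size `y` (equivalently, every
red/blue colouring of the edges of `K_N` contains a red `K_x` or a blue `K_y`). -/
noncomputable def ramseyNumber (x y : ℕ) : ℕ :=
  sInf {N | ∀ G : SimpleGraph (Fin N),
    (∃ s, G.IsNClique x s) ∨ (∃ s, Gᶜ.IsNClique y s)}

section AuxBasic

open Classical

namespace Tournament

variable {V : Type} [Fintype V] (T : Tournament V)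

lemma arc_total {u v : V} (h : u ≠ v) (h2 : ¬ T.arc u v) : T.arc v u := by
  by_contra h3
  exact h2 ((T.anti u v h).2 h3)

/-- bound all cliques of the backedge graph of `f` -/
def CliquesBdd {W : Type} (S : Tournament W) (f : W → ℕ) (n : ℕ) : Prop :=
  ∀ s : Finset W, (S.backedge f).IsClique ↑s → s.card ≤ n

lemma cliqueNum_le_of_bdd {W : Type} [Finite W] (S : Tournament W) {f : W → ℕ}
    (hf : Function.Injective f) {n : ℕ} (h : S.CliquesBdd f n) : S.cliqueNum ≤ n := by
  haveI : Fintype W := Fintype.ofFinite W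
  have h2 : (S.backedge f).cliqueNum ≤ n := by
    obtain ⟨s, hs⟩ := (S.backedge f).exists_isNClique_cliqueNum
    rw [← hs.2]
    exact h s hs.1
  exact le_trans (Nat.sInf_le ⟨f, hf, rfl⟩) h2

lemma cliqueNum_exists_optimal {W : Type} [Finite W] (S : Tournament W) :
    ∃ f : W → ℕ, Function.Injective f ∧ (∀ x, f x < Nat.card W) ∧
      S.CliquesBdd f S.cliqueNum := by
  haveI : Fintype W := Fintype.ofFinite W
  obtain ⟨f₀, hf₀, hval⟩ :
      S.cliqueNum ∈ {n | ∃ f : W → ℕ, Function.Injective f ∧ (S.backedge f).cliqueNum = n} := by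
    apply Nat.sInf_mem
    exact ⟨_, fun x => ((Fintype.equivFin W) x : ℕ),
      fun x y hxy => (Fintype.equivFin W).injective (Fin.ext hxy), rfl⟩
  set g : W → ℕ := fun x => (Finset.univ.filter (fun y => f₀ y < f₀ x)).card with hg
  have hmono : ∀ x y, f₀ x < f₀ y → g x < g y := by
    intro x y hxy
    apply Finset.card_lt_card
    constructor
    · intro z hz
      simp only [Finset.mem_filter, Finset.mem_univ, true_and] at hz ⊢
      omega
    · intro hsub
      have := hsub (by simp [hxy] : x ∈ Finset.univ.filter (fun y' => f₀ y' < f₀ y))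
      simp at this
  have hiff : ∀ x y, g x < g y ↔ f₀ x < f₀ y := by
    intro x y
    constructor
    · intro hxy
      rcases lt_trichotomy (f₀ x) (f₀ y) with h | h | h
      · exact h
      · exfalso; rw [hf₀ (by omega : f₀ x = f₀ y)] at hxy; omega
      · exact absurd (hmono _ _ h) (by omega)
    · exact hmono x y
  have hginj : Function.Injective g := by
    intro x y hxy
    by_contra hne
    rcases lt_trichotomy (f₀ x) (f₀ y) with h | h | h
    · have := hmono _ _ h; omega
    · exact hne (hf₀ h)
    · have := hmono _ _ h; omega
  have hsame : S.backedge g = S.backedge f₀ := by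
    ext u v
    simp only [backedge, hiff]
  refine ⟨g, hginj, ?_, ?_⟩
  · intro x
    have hx : Finset.univ.filter (fun y => f₀ y < f₀ x) ⊆ Finset.univ.erase x := by
      intro z hz
      simp only [Finset.mem_filter, Finset.mem_univ, true_and] at hz
      simp only [Finset.mem_erase, Finset.mem_univ, and_true]
      intro hzx; rw [hzx] at hz; omega
    have h1 := Finset.card_le_card hx
    have h2 : (Finset.univ.erase x).card = Fintype.card W - 1 := by
      rw [Finset.card_erase_of_mem (Finset.mem_univ x), Finset.card_univ]
    have h3 : 0 < Fintype.card W := Fintype.card_pos_iff.mpr ⟨x⟩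
    rw [Nat.card_eq_fintype_card]
    simp only [hg]
    omega
  · intro s hs
    rw [hsame] at hs
    rw [← hval]
    exact hs.card_le_cliqueNum

end Tournament

end AuxBasic
section AuxOn

open Classical

namespace Tournament

variable {V : Type} [Fintype V] (T : Tournament V)

lemma cliqueNumOn_le_of_bdd {X : Set V} {f : ↥X → ℕ} (hf : Function.Injective f)
    {n : ℕ} (h : (T.restrict X).CliquesBdd f n) : T.cliqueNumOn X ≤ n :=
  cliqueNum_le_of_bdd _ hf h

lemma exists_optimal_on (X : Set V) :
    ∃ f : ↥X → ℕ, Function.Injective f ∧ (∀ x, f x < Nat.card V + 1) ∧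
      (T.restrict X).CliquesBdd f (T.cliqueNumOn X) := by
  obtain ⟨f, hinj, hbd, hcl⟩ := (T.restrict X).cliqueNum_exists_optimal
  refine ⟨f, hinj, fun x => lt_of_lt_of_le (hbd x) ?_, hcl⟩
  have : Nat.card ↥X ≤ Nat.card V := Nat.card_le_card_of_injective _ Subtype.val_injective
  omega

lemma cliquesBdd_restrict {X Y : Set V} (hXY : X ⊆ Y) {f : ↥Y → ℕ} {n : ℕ}
    (h : (T.restrict Y).CliquesBdd f n) :
    (T.restrict X).CliquesBdd (fun x => f ⟨x.1, hXY x.2⟩) n := by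
  intro s hs
  set emb : ↥X ↪ ↥Y := ⟨fun x => ⟨x.1, hXY x.2⟩, by
    rintro ⟨x, hx⟩ ⟨y, hy⟩ hxy
    simpa using congrArg Subtype.val hxy⟩ with hemb
  have : (s.map emb).card ≤ n := by
    apply h
    rintro x hx y hy hne
    simp only [Finset.coe_map, Set.mem_image, Finset.mem_coe] at hx hy
    obtain ⟨u, hu, rfl⟩ := hx
    obtain ⟨v, hv, rfl⟩ := hy
    have huv : u ≠ v := fun hh => hne (by rw [hh])
    exact hs (Finset.mem_coe.mpr hu) (Finset.mem_coe.mpr hv) huv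
  rwa [Finset.card_map] at this

lemma cliqueNumOn_mono {X Y : Set V} (hXY : X ⊆ Y) : T.cliqueNumOn X ≤ T.cliqueNumOn Y := by
  obtain ⟨f, hinj, _, hcl⟩ := T.exists_optimal_on Y
  have hinj' : Function.Injective (fun x : ↥X => f ⟨x.1, hXY x.2⟩) := by
    intro x y h
    have h2 := hinj h
    have h3 : (x : V) = (y : V) := congrArg (fun z : ↥Y => (z : V)) h2
    exact Subtype.ext h3
  exact T.cliqueNumOn_le_of_bdd hinj' (T.cliquesBdd_restrict hXY hcl)

/-- Transfer a clique bound through a subset inclusion with order-compatible maps. -/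
lemma clique_sub_bound {U X : Set V} (hXU : X ⊆ U) (f : ↥U → ℕ) {g : ↥X → ℕ} {n : ℕ}
    (hg : (T.restrict X).CliquesBdd g n)
    (hcomp : ∀ x y : ↥X, g x < g y ↔ f ⟨x.1, hXU x.2⟩ < f ⟨y.1, hXU y.2⟩)
    {s t : Finset ↥U} (hs : ((T.restrict U).backedge f).IsClique ↑s)
    (hts : t ⊆ s) (htX : ∀ u ∈ t, u.1 ∈ X) : t.card ≤ n := by
  classical
  set emb : {u : ↥U // u ∈ t} ↪ ↥X :=
    ⟨fun w => ⟨w.1.1, htX w.1 w.2⟩, by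
      rintro ⟨u, hu⟩ ⟨v, hv⟩ h
      have h3 : (u : V) = (v : V) := congrArg (fun z : ↥X => (z : V)) h
      have h4 : u = v := Subtype.ext h3
      subst h4
      rfl⟩ with hemb
  have hcard : (t.attach.map emb).card = t.card := by
    rw [Finset.card_map, Finset.card_attach]
  rw [← hcard]
  apply hg
  rintro x hx y hy hne
  simp only [Finset.coe_map, Set.mem_image, Finset.mem_coe, Finset.mem_attach] at hx hy
  obtain ⟨⟨u, hu⟩, _, rfl⟩ := hx
  obtain ⟨⟨v, hv⟩, _, rfl⟩ := hy
  have huv : u ≠ v := by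
    intro h
    apply hne
    subst h
    rfl
  have hadj := hs (Finset.mem_coe.mpr (hts hu)) (Finset.mem_coe.mpr (hts hv)) huv
  rcases hadj with ⟨h1, h2⟩ | ⟨h1, h2⟩
  · exact Or.inl ⟨(hcomp _ _).mpr h1, h2⟩
  · exact Or.inr ⟨(hcomp _ _).mpr h1, h2⟩

lemma cliqueNumOn_union_le (X Y : Set V) :
    T.cliqueNumOn (X ∪ Y) ≤ T.cliqueNumOn X + T.cliqueNumOn Y := by
  obtain ⟨fX, hXinj, hXbd, hXcl⟩ := T.exists_optimal_on X
  obtain ⟨fY, hYinj, hYbd, hYcl⟩ := T.exists_optimal_on Y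
  set f : ↥(X ∪ Y) → ℕ := fun u =>
    if h : u.1 ∈ X then 2 * fX ⟨u.1, h⟩ else 2 * fY ⟨u.1, u.2.resolve_left h⟩ + 1 with hf
  have hinj : Function.Injective f := by
    rintro ⟨x, hx⟩ ⟨y, hy⟩ h
    simp only [hf] at h
    split_ifs at h with h1 h2 h2
    · have h4 := hXinj (by omega : fX ⟨x, h1⟩ = fX ⟨y, h2⟩)
      have h5 : x = y := congrArg (fun z : ↥X => (z : V)) h4
      exact Subtype.ext h5
    · omega
    · omega
    · have h4 := hYinj (by omega :
        fY ⟨x, hx.resolve_left h1⟩ = fY ⟨y, hy.resolve_left h2⟩)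
      have h5 : x = y := congrArg (fun z : ↥(Y : Set V) => (z : V)) h4
      exact Subtype.ext h5
  apply T.cliqueNumOn_le_of_bdd hinj
  intro s hs
  have hsplit := Finset.card_filter_add_card_filter_not
    (s := s) (p := fun u => u.1 ∈ X)
  have hXpart : (s.filter (fun u => u.1 ∈ X)).card ≤ T.cliqueNumOn X := by
    apply T.clique_sub_bound Set.subset_union_left f hXcl ?_ hs
      (Finset.filter_subset _ _) (fun u hu => (Finset.mem_filter.mp hu).2)
    intro x y
    simp only [hf]
    rw [dif_pos x.2, dif_pos y.2]
    simp only [Subtype.coe_eta]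
    constructor <;> intro <;> omega
  have hYpart : (s.filter (fun u => ¬ u.1 ∈ X)).card ≤ T.cliqueNumOn Y := by
    have heq : (s.filter (fun u => ¬ u.1 ∈ X)).card
        = (s.filter (fun u => u.1 ∈ (Y \ X : Set V))).card := by
      congr 1
      apply Finset.filter_congr
      intro u hu
      simp only [Set.mem_diff, eq_iff_iff]
      exact ⟨fun h => ⟨u.2.resolve_left h, h⟩, fun h => h.2⟩
    rw [heq]
    have hcl' := T.cliquesBdd_restrict (Set.diff_subset : (Y \ X : Set V) ⊆ Y) hYcl
    apply T.clique_sub_bound (fun z hz => Or.inr hz.1) f hcl' ?_ hs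
      (Finset.filter_subset _ _) (fun u hu => (Finset.mem_filter.mp hu).2)
    intro x y
    simp only [hf]
    rw [dif_neg x.2.2, dif_neg y.2.2]
    constructor <;> intro <;> omega
  omega

lemma cliqueNumOn_empty : T.cliqueNumOn (∅ : Set V) = 0 := by
  refine Nat.le_zero.mp (T.cliqueNumOn_le_of_bdd (f := fun x => 0) ?_ ?_)
  · rintro ⟨x, hx⟩; exact absurd hx (Set.notMem_empty x)
  · intro s hs
    rcases s.eq_empty_or_nonempty with rfl | ⟨⟨x, hx⟩, _⟩
    · simp
    · exact absurd hx (Set.notMem_empty x)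

lemma cliqueNumOn_diff_ge (X F : Set V) :
    T.cliqueNumOn X ≤ T.cliqueNumOn (X \ F) + T.cliqueNumOn F := by
  refine le_trans (T.cliqueNumOn_mono ?_) (T.cliqueNumOn_union_le (X \ F) F)
  intro x hx
  by_cases h : x ∈ F
  · exact Or.inr h
  · exact Or.inl ⟨hx, h⟩

lemma cliqueNumOn_biUnion_le {ι : Type} (s : Finset ι) (g : ι → Set V) (a : ℕ)
    (h : ∀ i ∈ s, T.cliqueNumOn (g i) ≤ a) :
    T.cliqueNumOn (⋃ i ∈ s, g i) ≤ s.card * a := by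
  induction s using Finset.induction with
  | empty => simp [T.cliqueNumOn_empty]
  | @insert i s hi ih =>
    have : (⋃ j ∈ insert i s, g j) = g i ∪ ⋃ j ∈ s, g j := by
      simp [Set.biUnion_insert]
    rw [this, Finset.card_insert_of_notMem hi]
    refine le_trans (T.cliqueNumOn_union_le _ _) ?_
    have h1 := h i (Finset.mem_insert_self i s)
    have h2 := ih (fun j hj => h j (Finset.mem_insert_of_mem hj))
    have : (s.card + 1) * a = a + s.card * a := by ring
    omega

end Tournament

end AuxOn
section AuxAType

set_option linter.unusedSectionVars false

/-- A `Fintype` instance for `AType n`. -/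
def ATypeFintype : (n : ℕ) → Fintype (AType n)
  | 0 => (inferInstance : Fintype Empty)
  | n+1 =>
    letI := ATypeFintype n
    (inferInstance : Fintype ((Fin n × AType n) ⊕ Fin (n+1)))

instance (n : ℕ) : Fintype (AType n) := ATypeFintype n

lemma cardA_succ (n : ℕ) :
    Nat.card (AType (n+1)) = n * Nat.card (AType n) + (n+1) := by
  have h : Nat.card ((Fin n × AType n) ⊕ Fin (n+1))
      = n * Nat.card (AType n) + (n+1) := by
    rw [Nat.card_sum, Nat.card_prod]
    simp [Nat.card_eq_fintype_card]
  exact h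

lemma succ_le_two_factorial : ∀ n : ℕ, n + 1 ≤ 2 * n.factorial := by
  intro n
  cases n with
  | zero => simp
  | succ k =>
    have h := Nat.self_le_factorial (k+1)
    have h2 := Nat.mul_le_mul_left 2 h
    omega

lemma cardA_le : ∀ n : ℕ, Nat.card (AType n) ≤ 2 * n.factorial := by
  intro n
  induction n with
  | zero =>
    haveI : IsEmpty (AType 0) := ⟨fun x => Empty.elim x⟩
    simp [Nat.card_of_isEmpty]
  | succ k ih =>
    rw [cardA_succ, Nat.factorial_succ]
    have h1 : k * Nat.card (AType k) ≤ k * (2 * k.factorial) := Nat.mul_le_mul_left k ih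
    have h2 := succ_le_two_factorial k
    nlinarith

lemma AType_nonempty (n : ℕ) : Nonempty (AType (n+1)) := ⟨Sum.inr 0⟩

end AuxAType
section Machinery

set_option linter.unusedSectionVars false

open Classical

namespace Tournament

variable {V : Type} [Fintype V] (T : Tournament V) (c : ℕ) (Q' : ℕ → Set V) (r : ℕ)

/-- Union of bags with indices in `[b, e)`. -/
def WW (b e : ℕ) : Set V := ⋃ (i : ℕ) (_ : b ≤ i ∧ i < e), Q' i

lemma WW_mono {b e e' : ℕ} (h : e ≤ e') : WW Q' b e ⊆ WW Q' b e' := by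
  intro x hx
  simp only [WW, Set.mem_iUnion] at hx ⊢
  obtain ⟨i, ⟨h1, h2⟩, h3⟩ := hx
  exact ⟨i, ⟨h1, by omega⟩, h3⟩

lemma WW_empty {b e : ℕ} (h : e ≤ b) : WW Q' b e = ∅ := by
  ext x
  simp only [WW, Set.mem_iUnion, Set.mem_empty_iff_false, iff_false]
  rintro ⟨i, ⟨h1, h2⟩, _⟩
  omega

lemma WW_le_r (hQr : ∀ i, r ≤ i → Q' i = ∅) {b e : ℕ} : WW Q' b e ⊆ WW Q' b r := by
  intro x hx
  simp only [WW, Set.mem_iUnion] at hx ⊢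
  obtain ⟨i, ⟨h1, h2⟩, h3⟩ := hx
  by_cases hir : i < r
  · exact ⟨i, ⟨h1, hir⟩, h3⟩
  · rw [hQr i (by omega)] at h3
    exact absurd h3 (Set.notMem_empty x)

/-- The next cut point of the greedy decomposition. -/
noncomputable def nxt (b : ℕ) : ℕ :=
  if H : ∃ e, c ≤ T.cliqueNumOn (WW Q' b e) then Nat.find H else r

lemma nxt_le_r (hQr : ∀ i, r ≤ i → Q' i = ∅) (b : ℕ) : nxt T c Q' r b ≤ r := by
  unfold nxt
  split_ifs with H
  · exact Nat.find_le (le_trans (Nat.find_spec H) (T.cliqueNumOn_mono (WW_le_r Q' r hQr)))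
  · exact le_rfl

lemma nxt_spec {b : ℕ} (H : c ≤ T.cliqueNumOn (WW Q' b r)) :
    c ≤ T.cliqueNumOn (WW Q' b (nxt T c Q' r b)) ∧
      ∀ e, e < nxt T c Q' r b → T.cliqueNumOn (WW Q' b e) < c := by
  have H' : ∃ e, c ≤ T.cliqueNumOn (WW Q' b e) := ⟨r, H⟩
  unfold nxt
  rw [dif_pos H']
  exact ⟨Nat.find_spec H', fun e he => by
    have := Nat.find_min H' he
    omega⟩

lemma nxt_not (hQr : ∀ i, r ≤ i → Q' i = ∅) {b : ℕ} (H : ¬ c ≤ T.cliqueNumOn (WW Q' b r)) : nxt T c Q' r b = r := by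
  unfold nxt
  rw [dif_neg]
  rintro ⟨e, he⟩
  exact H (le_trans he (T.cliqueNumOn_mono (WW_le_r Q' r hQr)))

lemma nxt_gt (hc1 : 1 ≤ c) {b : ℕ} (H : c ≤ T.cliqueNumOn (WW Q' b r)) : b < nxt T c Q' r b := by
  by_contra h
  have h1 := (nxt_spec T c Q' r H).1
  rw [WW_empty Q' (by omega : nxt T c Q' r b ≤ b), T.cliqueNumOn_empty] at h1
  omega

lemma nxt_ge (hQr : ∀ i, r ≤ i → Q' i = ∅) (hc1 : 1 ≤ c) {b : ℕ} (hb : b ≤ r) : b ≤ nxt T c Q' r b := by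
  by_cases H : c ≤ T.cliqueNumOn (WW Q' b r)
  · exact le_of_lt (nxt_gt T c Q' r hc1 H)
  · rw [nxt_not T c Q' r hQr H]; exact hb

lemma nxt_bound (hc1 : 1 ≤ c) (hQc : ∀ i, T.cliqueNumOn (Q' i) ≤ c) {b : ℕ} (H : c ≤ T.cliqueNumOn (WW Q' b r)) :
    T.cliqueNumOn (WW Q' b (nxt T c Q' r b)) < 2 * c := by
  obtain ⟨h1, h2⟩ := nxt_spec T c Q' r H
  set e := nxt T c Q' r b with he
  have hgt : b < e := nxt_gt T c Q' r hc1 H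
  have hsub : WW Q' b e ⊆ WW Q' b (e-1) ∪ Q' (e-1) := by
    intro x hx
    simp only [WW, Set.mem_iUnion, Set.mem_union] at hx ⊢
    obtain ⟨i, ⟨hi1, hi2⟩, hi3⟩ := hx
    by_cases hie : i < e - 1
    · exact Or.inl ⟨i, ⟨hi1, hie⟩, hi3⟩
    · have : i = e - 1 := by omega
      subst this
      exact Or.inr hi3
  have := le_trans (T.cliqueNumOn_mono hsub) (T.cliqueNumOn_union_le _ _)
  have h3 := h2 (e-1) (by omega)
  have h4 := hQc (e-1)
  omega

/-- Cut points of the greedy decomposition. -/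
noncomputable def cuts : ℕ → ℕ := fun l => (nxt T c Q' r)^[l] 0

lemma cuts_zero : cuts T c Q' r 0 = 0 := rfl

lemma cuts_succ (l : ℕ) : cuts T c Q' r (l+1) = nxt T c Q' r (cuts T c Q' r l) := by
  unfold cuts
  rw [Function.iterate_succ_apply']

lemma cuts_le_r (hQr : ∀ i, r ≤ i → Q' i = ∅) (l : ℕ) : cuts T c Q' r l ≤ r := by
  induction l with
  | zero => rw [cuts_zero]; omega
  | succ k ih => rw [cuts_succ]; exact nxt_le_r T c Q' r hQr _

lemma cuts_mono (hQr : ∀ i, r ≤ i → Q' i = ∅) (hc1 : 1 ≤ c) {l l' : ℕ} (h : l ≤ l') : cuts T c Q' r l ≤ cuts T c Q' r l' := by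
  induction l' with
  | zero => have : l = 0 := by omega
            subst this; omega
  | succ k ih =>
    rcases Nat.lt_or_ge l (k+1) with h1 | h1
    · have h2 := ih (by omega)
      rw [cuts_succ]
      exact le_trans h2 (nxt_ge T c Q' r hQr hc1 (cuts_le_r T c Q' r hQr k))
    · have : l = k + 1 := by omega
      subst this; omega

lemma nxt_r_eq (hQr : ∀ i, r ≤ i → Q' i = ∅) (hc1 : 1 ≤ c) : nxt T c Q' r r = r := by
  apply nxt_not T c Q' r hQr
  rw [WW_empty Q' le_rfl, T.cliqueNumOn_empty]
  omega

lemma cuts_reach (hQr : ∀ i, r ≤ i → Q' i = ∅) (hc1 : 1 ≤ c) : cuts T c Q' r (r+1) = r := by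
  have key : ∀ l, min l r ≤ cuts T c Q' r l := by
    intro l
    induction l with
    | zero => omega
    | succ k ih =>
      rcases Nat.lt_or_ge (cuts T c Q' r k) r with h1 | h1
      · by_cases H : c ≤ T.cliqueNumOn (WW Q' (cuts T c Q' r k) r)
        · have := nxt_gt T c Q' r hc1 H
          rw [cuts_succ]
          omega
        · rw [cuts_succ, nxt_not T c Q' r hQr H]
          omega
      · have h2 : cuts T c Q' r k = r := le_antisymm (cuts_le_r T c Q' r hQr k) h1
        rw [cuts_succ, h2, nxt_r_eq T c Q' r hQr hc1]
        omega
  have h1 := key (r+1)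
  have h2 := cuts_le_r T c Q' r hQr (r+1)
  omega

/-- Pieces of the greedy decomposition. -/
noncomputable def piece (l : ℕ) : Set V :=
  WW Q' (cuts T c Q' r l) (cuts T c Q' r (l+1))

lemma piece_w_lt (hQr : ∀ i, r ≤ i → Q' i = ∅) (hc1 : 1 ≤ c) (hQc : ∀ i, T.cliqueNumOn (Q' i) ≤ c) (l : ℕ) : T.cliqueNumOn (piece T c Q' r l) < 2 * c := by
  by_cases H : c ≤ T.cliqueNumOn (WW Q' (cuts T c Q' r l) r)
  · have := nxt_bound T c Q' r hc1 hQc H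
    rw [piece, cuts_succ]
    exact this
  · have h1 : T.cliqueNumOn (piece T c Q' r l)
        ≤ T.cliqueNumOn (WW Q' (cuts T c Q' r l) r) :=
      T.cliqueNumOn_mono (WW_le_r Q' r hQr)
    omega

lemma piece_w_ge_of_full {l : ℕ} (H : c ≤ T.cliqueNumOn (WW Q' (cuts T c Q' r l) r)) :
    c ≤ T.cliqueNumOn (piece T c Q' r l) := by
  rw [piece, cuts_succ]
  exact (nxt_spec T c Q' r H).1

lemma full_of_lt (hQr : ∀ i, r ≤ i → Q' i = ∅) (hc1 : 1 ≤ c) {l l' : ℕ} (h : l < l') {x : V} (hx : x ∈ piece T c Q' r l') :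
    c ≤ T.cliqueNumOn (WW Q' (cuts T c Q' r l) r) := by
  by_contra H
  have h1 : cuts T c Q' r (l+1) = r := by
    rw [cuts_succ]; exact nxt_not T c Q' r hQr H
  have h2 : ∀ k, l + 1 ≤ k → cuts T c Q' r k = r := by
    intro k hk
    induction k with
    | zero => omega
    | succ k' ih =>
      rcases Nat.lt_or_ge k' (l+1) with h3 | h3
      · have : l + 1 = k' + 1 := by omega
        rw [← this]; exact h1
      · rw [cuts_succ, ih h3, nxt_r_eq T c Q' r hQr hc1]
  have h3 : piece T c Q' r l' = ∅ := by
    rw [piece, h2 l' (by omega), h2 (l'+1) (by omega)]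
    exact WW_empty Q' le_rfl
  rw [h3] at hx
  exact absurd hx (Set.notMem_empty x)

lemma mem_piece_iff {l : ℕ} {x : V} : x ∈ piece T c Q' r l ↔
    ∃ i, (cuts T c Q' r l ≤ i ∧ i < cuts T c Q' r (l+1)) ∧ x ∈ Q' i := by
  simp [piece, WW, Set.mem_iUnion]

lemma piece_subset_WW (hQr : ∀ i, r ≤ i → Q' i = ∅) (l : ℕ) : piece T c Q' r l ⊆ WW Q' 0 r := by
  intro x hx
  rw [mem_piece_iff] at hx
  obtain ⟨i, ⟨h1, h2⟩, h3⟩ := hx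
  by_cases hir : i < r
  · simp only [WW, Set.mem_iUnion]
    exact ⟨i, ⟨by omega, hir⟩, h3⟩
  · rw [hQr i (by omega)] at h3
    exact absurd h3 (Set.notMem_empty x)

end Tournament

end Machinery
set_option maxHeartbeats 1000000 in
open Tournament in
/-- Theorem (bounding the clique number of a near-bag-chain in an `A m`-free
tournament). -/
theorem stmt_17 {V : Type} [Fintype V] (m : ℕ) (hm : 2 ≤ m)
    (csmall a c : ℕ) (hc : 2 * Nat.factorial m * a + csmall ≤ c)
    (T : Tournament V)
    (hAfree : ¬ T.HasCopy (Atour m))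
    (hsub : ∀ X : Set V, csmall ≤ T.cliqueNumOn X → (T.restrict X).HasCopy (Atour (m - 1)))
    {r : ℕ} (Q : Fin r → Set V) (hQ : T.IsNearBagChain c a Q) :
    T.cliqueNumOn (⋃ i, Q i) ≤ 4 * m * c := by
  classical
  obtain ⟨m', rfl⟩ : ∃ m', m = m' + 1 := ⟨m - 1, by omega⟩
  have hm' : 1 ≤ m' := by omega
  obtain ⟨hdisj, hbagc, hvert⟩ := hQ
  by_contra hcon
  push_neg at hcon
  set U : Set V := ⋃ i, Q i with hU
  -- `csmall ≥ 1`
  have hcsmall : 1 ≤ csmall := by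
    by_contra h
    obtain ⟨f, hf, _⟩ := hsub ∅ (by
      rw [T.cliqueNumOn_empty]; omega)
    obtain ⟨m'', hm''⟩ : ∃ m'', m' = m'' + 1 := ⟨m' - 1, by omega⟩
    have : Nonempty (AType (m' + 1 - 1)) := by
      rw [(by rfl : m' + 1 - 1 = m'), hm'']
      exact AType_nonempty m''
    obtain ⟨x⟩ := this
    exact absurd (f x).2 (Set.notMem_empty _)
  have hcs_le_c : csmall ≤ c := le_trans (Nat.le_add_left _ _) hc
  have hc1 : 1 ≤ c := le_trans hcsmall hcs_le_c
  -- bags indexed by ℕ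
  set Q' : ℕ → Set V := fun i => if h : i < r then Q ⟨i, h⟩ else ∅ with hQ'def
  have hQr : ∀ i, r ≤ i → Q' i = ∅ := fun i hi => dif_neg (by omega)
  have hQ'lt : ∀ (i : ℕ) (h : i < r), Q' i = Q ⟨i, h⟩ := fun i h => dif_pos h
  have hQc : ∀ i, T.cliqueNumOn (Q' i) ≤ c := by
    intro i
    by_cases h : i < r
    · rw [hQ'lt i h]; exact hbagc ⟨i, h⟩
    · rw [hQr i (by omega), T.cliqueNumOn_empty]; omega
  have hUW : U = WW Q' 0 r := by
    ext x
    simp only [hU, WW, Set.mem_iUnion]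
    constructor
    · rintro ⟨i, hi⟩
      exact ⟨i.1, ⟨by omega, i.2⟩, by rw [hQ'lt i.1 i.2]; exact hi⟩
    · rintro ⟨i, ⟨_, hir⟩, hx⟩
      rw [hQ'lt i hir] at hx
      exact ⟨⟨i, hir⟩, hx⟩
  -- bag of a vertex
  have hbag_unique : ∀ (x : V) (i i' : ℕ), x ∈ Q' i → x ∈ Q' i' → i = i' := by
    intro x i i' hi hi'
    by_contra hne
    have hir : i < r := by
      by_contra h; rw [hQr i (by omega)] at hi; exact absurd hi (Set.notMem_empty x)
    have hir' : i' < r := by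
      by_contra h; rw [hQr i' (by omega)] at hi'; exact absurd hi' (Set.notMem_empty x)
    rw [hQ'lt i hir] at hi
    rw [hQ'lt i' hir'] at hi'
    have : (⟨i, hir⟩ : Fin r) ≠ ⟨i', hir'⟩ := by
      intro h; exact hne (congrArg Fin.val h)
    exact Set.disjoint_left.mp (hdisj _ _ this) hi hi'
  set bagOf : V → ℕ := fun x => if h : ∃ i, x ∈ Q' i then Nat.find h else 0 with hbagOf_def
  have hbagOf_eq : ∀ (x : V) (i : ℕ), x ∈ Q' i → bagOf x = i := by
    intro x i hxi
    have hex : ∃ i, x ∈ Q' i := ⟨i, hxi⟩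
    simp only [hbagOf_def, dif_pos hex]
    exact hbag_unique x _ i (Nat.find_spec hex) hxi
  have hbagOf_mem : ∀ x ∈ U, x ∈ Q' (bagOf x) ∧ bagOf x < r := by
    intro x hx
    rw [hUW] at hx
    simp only [WW, Set.mem_iUnion] at hx
    obtain ⟨i, ⟨_, hir⟩, hxi⟩ := hx
    rw [hbagOf_eq x i hxi]
    exact ⟨hxi, hir⟩
  -- later and earlier sets
  set Later : ℕ → Set V := fun i => ⋃ (i' : ℕ) (_ : i < i'), Q' i' with hLater
  set Earlier : ℕ → Set V := fun i => ⋃ (i' : ℕ) (_ : i' < i), Q' i' with hEarlier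
  have hmem_r : ∀ (y : V) (i' : ℕ), y ∈ Q' i' → i' < r := by
    intro y i' hy
    by_contra h
    rw [hQr i' (by omega)] at hy
    exact absurd hy (Set.notMem_empty y)
  have hvert' : ∀ x ∈ U, T.cliqueNumOn (T.inN x ∩ Later (bagOf x)) ≤ a ∧
      T.cliqueNumOn (T.outN x ∩ Earlier (bagOf x)) ≤ a := by
    intro x hx
    obtain ⟨hxQ, hxr⟩ := hbagOf_mem x hx
    have hxQi : x ∈ Q ⟨bagOf x, hxr⟩ := by rw [← hQ'lt] ; exact hxQ
    have h := hvert ⟨bagOf x, hxr⟩ x hxQi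
    have hset1 : Later (bagOf x) = ⋃ j, ⋃ (_ : (⟨bagOf x, hxr⟩ : Fin r) < j), Q j := by
      ext y
      simp only [hLater, Set.mem_iUnion]
      constructor
      · rintro ⟨i', hi', hy⟩
        exact ⟨⟨i', hmem_r y i' hy⟩, hi', by rw [hQ'lt _ (hmem_r y i' hy)] at hy; exact hy⟩
      · rintro ⟨j, hij, hy⟩
        exact ⟨j.1, hij, by rw [hQ'lt _ j.2]; exact hy⟩
    have hset2 : Earlier (bagOf x) = ⋃ j, ⋃ (_ : j < (⟨bagOf x, hxr⟩ : Fin r)), Q j := by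
      ext y
      simp only [hEarlier, Set.mem_iUnion]
      constructor
      · rintro ⟨i', hi', hy⟩
        have hir := hmem_r y i' hy
        exact ⟨⟨i', hir⟩, hi', by rw [hQ'lt _ hir] at hy; exact hy⟩
      · rintro ⟨j, hij, hy⟩
        exact ⟨j.1, hij, by rw [hQ'lt _ j.2]; exact hy⟩
    rw [hset1, hset2]
    exact h
  -- pieces
  set cc : ℕ → ℕ := cuts T c Q' r with hcc
  set P : ℕ → Set V := piece T c Q' r with hP
  have hPU : ∀ l, P l ⊆ U := by
    intro l
    rw [hUW]
    exact piece_subset_WW T c Q' r hQr l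
  set pieceOf : V → ℕ := fun x => if h : ∃ l, bagOf x < cc (l+1) then Nat.find h else 0
    with hpieceOf_def
  have hreach : cc (r + 1) = r := by
    rw [hcc]
    exact cuts_reach T c Q' r hQr hc1
  have hccmono : ∀ {l l' : ℕ}, l ≤ l' → cc l ≤ cc l' := by
    intro l l' h
    rw [hcc]
    exact cuts_mono T c Q' r hQr hc1 h
  have hex_piece : ∀ x ∈ U, ∃ l, bagOf x < cc (l + 1) := by
    intro x hx
    exact ⟨r, by rw [hreach]; exact (hbagOf_mem x hx).2⟩
  have hpiece_props : ∀ x ∈ U, cc (pieceOf x) ≤ bagOf x ∧ bagOf x < cc (pieceOf x + 1) := by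
    intro x hx
    have hex := hex_piece x hx
    have heq : pieceOf x = Nat.find hex := by simp only [hpieceOf_def, dif_pos hex]
    constructor
    · rw [heq]
      rcases Nat.eq_zero_or_pos (Nat.find hex) with h0 | h0
      · rw [h0, hcc, cuts_zero]
        omega
      · have hmin := Nat.find_min hex (by omega : Nat.find hex - 1 < Nat.find hex)
        have : Nat.find hex - 1 + 1 = Nat.find hex := by omega
        rw [this] at hmin
        omega
    · rw [heq]
      exact Nat.find_spec hex
  have hpiece_spec : ∀ x ∈ U, x ∈ P (pieceOf x) := by
    intro x hx
    obtain ⟨h1, h2⟩ := hpiece_props x hx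
    rw [hP]
    rw [mem_piece_iff]
    exact ⟨bagOf x, ⟨h1, h2⟩, (hbagOf_mem x hx).1⟩
  have hpiece_eq : ∀ x ∈ U, ∀ l, x ∈ P l → pieceOf x = l := by
    intro x hx l hxl
    rw [hP, mem_piece_iff] at hxl
    obtain ⟨i, ⟨h1, h2⟩, hxi⟩ := hxl
    rw [← hcc] at h1 h2
    have hbi : bagOf x = i := hbagOf_eq x i hxi
    have hex := hex_piece x hx
    have heq : pieceOf x = Nat.find hex := by simp only [hpieceOf_def, dif_pos hex]
    rw [heq]
    apply le_antisymm
    · exact Nat.find_le (by rw [hbi]; exact h2)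
    · by_contra hlt
      have h3 : Nat.find hex + 1 ≤ l := by omega
      have h4 := Nat.find_spec hex
      have h5 : cc (Nat.find hex + 1) ≤ cc l := hccmono h3
      omega
  have hbag_of_piece_lt : ∀ x ∈ U, ∀ y ∈ U, pieceOf x < pieceOf y → bagOf x < bagOf y := by
    intro x hx y hy h
    have h1 := (hpiece_props x hx).2
    have h2 := (hpiece_props y hy).1
    have h3 : cc (pieceOf x + 1) ≤ cc (pieceOf y) := hccmono (by omega)
    omega
  -- optimal orderings of the pieces
  have hgex := fun l => T.exists_optimal_on (P l)
  choose gP hgP_inj hgP_bd hgP_cl using hgex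
  set B : ℕ := Nat.card V + 1 with hB
  have hB1 : 1 ≤ B := by omega
  set fstar : ↥U → ℕ := fun u => pieceOf u.1 * B + gP (pieceOf u.1) ⟨u.1, hpiece_spec u.1 u.2⟩
    with hfstar
  have hfstar_eq : ∀ (x : V) (hx : x ∈ U) (l : ℕ) (hl : x ∈ P l),
      fstar ⟨x, hx⟩ = l * B + gP l ⟨x, hl⟩ := by
    intro x hx l hl
    have h := hpiece_eq x hx l hl
    subst h
    rfl
  have hdm : ∀ l g, g < B → (l * B + g) / B = l ∧ (l * B + g) % B = g := by
    intro l g hg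
    have h0 : 0 < B := by omega
    have he : l * B + g = g + B * l := by ring
    constructor
    · rw [he, Nat.add_mul_div_left _ _ h0, Nat.div_eq_of_lt hg]
      omega
    · rw [he, Nat.add_mul_mod_self_left, Nat.mod_eq_of_lt hg]
  have hfstar_piece : ∀ u : ↥U, fstar u / B = pieceOf u.1 := by
    intro u
    exact (hdm _ _ (hgP_bd _ _)).1
  have hfstar_inj : Function.Injective fstar := by
    intro u v h
    have h1 : pieceOf u.1 = pieceOf v.1 := by
      rw [← hfstar_piece u, ← hfstar_piece v, h]
    have h2 := congrArg (· % B) h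
    have hv' : v.1 ∈ P (pieceOf u.1) := by rw [h1]; exact hpiece_spec v.1 v.2
    have hh := h
    rw [hfstar_eq u.1 u.2 _ (hpiece_spec u.1 u.2), hfstar_eq v.1 v.2 _ hv'] at hh
    have h6 : gP (pieceOf u.1) ⟨u.1, hpiece_spec u.1 u.2⟩ = gP (pieceOf u.1) ⟨v.1, hv'⟩ := by
      omega
    have h7 := hgP_inj _ h6
    have h8 : u.1 = v.1 := congrArg (fun z : ↥(P (pieceOf u.1)) => (z : V)) h7
    exact Subtype.ext h8
  have hfstar_lt : ∀ u v : ↥U, pieceOf u.1 < pieceOf v.1 → fstar u < fstar v := by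
    intro u v h
    have h1 : pieceOf u.1 * B + B ≤ pieceOf v.1 * B := by
      have := Nat.mul_le_mul_right B (by omega : pieceOf u.1 + 1 ≤ pieceOf v.1)
      rw [Nat.succ_mul] at this
      exact this
    have h2 := hgP_bd (pieceOf u.1) ⟨u.1, hpiece_spec u.1 u.2⟩
    have h3 : 0 ≤ gP (pieceOf v.1) ⟨v.1, hpiece_spec v.1 v.2⟩ := Nat.zero_le _
    simp only [hfstar]
    omega
  -- extract a big clique
  haveI : Fintype ↥U := Fintype.ofFinite _
  have hwU : 4 * (m' + 1) * c + 1 ≤ T.cliqueNumOn U := by omega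
  have hKnum : 4 * (m' + 1) * c + 1 ≤ ((T.restrict U).backedge fstar).cliqueNum :=
    le_trans hwU (Nat.sInf_le ⟨fstar, hfstar_inj, rfl⟩)
  obtain ⟨K, hK⟩ := ((T.restrict U).backedge fstar).exists_isNClique_cliqueNum
  have hKclique := hK.1
  have hKcard : 4 * (m' + 1) * c + 1 ≤ K.card := by rw [hK.2]; exact hKnum
  have hKarc : ∀ u v : ↥U, u ∈ K → v ∈ K → pieceOf u.1 < pieceOf v.1 → T.arc v.1 u.1 := by
    intro u v hu hv hlt
    have hne : u ≠ v := by
      intro h; rw [h] at hlt; omega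
    have hadj := hKclique hu hv hne
    have hflt := hfstar_lt u v hlt
    rcases hadj with ⟨h1, h2⟩ | ⟨h1, h2⟩
    · exact h2
    · omega
  -- pieces hit by the clique
  set L : Finset ℕ := K.image (fun u => pieceOf u.1) with hL
  have hfiber : ∀ l, (K.filter (fun u => pieceOf u.1 = l)).card < 2 * c := by
    intro l
    have hb := T.clique_sub_bound (hPU l) fstar (hgP_cl l) ?_
      (t := K.filter (fun u => pieceOf u.1 = l)) hKclique
      (Finset.filter_subset _ _) ?_
    · have := piece_w_lt T c Q' r hQr hc1 hQc l
      rw [← hP] at this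
      omega
    · intro x y
      rw [hfstar_eq x.1 (hPU l x.2) l x.2, hfstar_eq y.1 (hPU l y.2) l y.2]
      simp only [Subtype.coe_eta]
      constructor <;> intro <;> omega
    · intro u hu
      have h1 := (Finset.mem_filter.mp hu).2
      rw [← h1]
      exact hpiece_spec u.1 u.2
  have hLcard : 2 * (m' + 1) + 1 ≤ L.card := by
    have hsum : K.card = ∑ l ∈ L, (K.filter (fun u => pieceOf u.1 = l)).card :=
      Finset.card_eq_sum_card_fiberwise (fun u hu => Finset.mem_image_of_mem _ hu)
    by_contra hcon2
    have h1 : ∑ l ∈ L, (K.filter (fun u => pieceOf u.1 = l)).card ≤ L.card * (2 * c) := by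
      apply Finset.sum_le_card_nsmul
      intro l _
      exact le_of_lt (hfiber l)
    have h2 : L.card * (2 * c) ≤ (2 * (m' + 1)) * (2 * c) :=
      Nat.mul_le_mul_right _ (by omega)
    have h3 : (2 * (m' + 1)) * (2 * c) = 4 * (m' + 1) * c := by ring
    omega
  -- the selected positions
  set σ : Fin L.card ↪o ℕ := L.orderEmbOfFin rfl with hσ
  set pos : ℕ → ℕ := fun k => if h : k < L.card then σ ⟨k, h⟩ else 0 with hpos
  have hpos_mono : ∀ k k', k < k' → k' < L.card → pos k < pos k' := by
    intro k k' h1 h2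
    simp only [hpos, dif_pos h2, dif_pos (by omega : k < L.card)]
    exact σ.strictMono (by simp [Fin.lt_def]; omega)
  have hpos_mem : ∀ k, k < L.card → pos k ∈ L := by
    intro k h
    simp only [hpos, dif_pos h]
    exact Finset.orderEmbOfFin_mem L rfl _
  have h2m : 2 * m' + 1 ≤ L.card := by omega
  -- the vertices v_i
  have hv_ex : ∀ i : Fin (m' + 1), ∃ u : ↥U, u ∈ K ∧ pieceOf u.1 = pos (2 * i.1) := by
    intro i
    have hmem : pos (2 * i.1) ∈ L := hpos_mem _ (by omega)
    rw [hL] at hmem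
    obtain ⟨u, hu1, hu2⟩ := Finset.mem_image.mp hmem
    exact ⟨u, hu1, hu2⟩
  choose vtx hvtxK hvtxP using hv_ex
  set vt : Fin (m' + 1) → V := fun i => (vtx i).1 with hvt
  have hvtU : ∀ i, vt i ∈ U := fun i => (vtx i).2
  have hvarc : ∀ i j : Fin (m' + 1), i.1 < j.1 → T.arc (vt j) (vt i) := by
    intro i j h
    apply hKarc _ _ (hvtxK i) (hvtxK j)
    rw [hvtxP i, hvtxP j]
    exact hpos_mono _ _ (by omega) (by omega)
  have hvt_piece : ∀ i : Fin (m' + 1), vt i ∈ P (pos (2 * i.1)) := by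
    intro i
    have := hpiece_spec (vt i) (hvtU i)
    rwa [hvtxP i] at this
  -- fullness of the pieces used for the copies of A_{m-1}
  have hfull : ∀ l, l < pos (2 * m') → c ≤ T.cliqueNumOn (P l) := by
    intro l hl
    have hx : vt (Fin.last m') ∈ P (pos (2 * m')) := by
      have := hvt_piece (Fin.last m')
      simpa using this
    rw [hP]
    refine piece_w_ge_of_full T c Q' r ?_
    exact full_of_lt T c Q' r hQr hc1 hl hx
  -- helper arc lemmas
  have harc_forward : ∀ (x y : V) (lx ly : ℕ), x ∈ P lx → y ∈ P ly → lx < ly →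
      y ∉ T.inN x ∩ Later (bagOf x) → T.arc x y := by
    intro x y lx ly hx hy hlt havoid
    have hxU := hPU lx hx
    have hyU := hPU ly hy
    have hpx : pieceOf x = lx := hpiece_eq x hxU lx hx
    have hpy : pieceOf y = ly := hpiece_eq y hyU ly hy
    have hbag : bagOf x < bagOf y := hbag_of_piece_lt x hxU y hyU (by omega)
    have hyL : y ∈ Later (bagOf x) := by
      simp only [hLater, Set.mem_iUnion]
      exact ⟨bagOf y, hbag, (hbagOf_mem y hyU).1⟩
    have hyIn : ¬ T.arc y x := fun h => havoid ⟨h, hyL⟩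
    have hne : x ≠ y := by intro h; rw [h] at hbag; omega
    exact T.arc_total (fun h => hne h.symm) hyIn
  have harc_backward : ∀ (x y : V) (lx ly : ℕ), x ∈ P lx → y ∈ P ly → ly < lx →
      y ∉ T.outN x ∩ Earlier (bagOf x) → T.arc y x := by
    intro x y lx ly hx hy hlt havoid
    have hxU := hPU lx hx
    have hyU := hPU ly hy
    have hpx : pieceOf x = lx := hpiece_eq x hxU lx hx
    have hpy : pieceOf y = ly := hpiece_eq y hyU ly hy
    have hbag : bagOf y < bagOf x := hbag_of_piece_lt y hyU x hxU (by omega)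
    have hyL : y ∈ Earlier (bagOf x) := by
      simp only [hEarlier, Set.mem_iUnion]
      exact ⟨bagOf y, hbag, (hbagOf_mem y hyU).1⟩
    have hyOut : ¬ T.arc x y := fun h => havoid ⟨h, hyL⟩
    have hne : x ≠ y := by intro h; rw [h] at hbag; omega
    exact T.arc_total hne hyOut
  -- piece positions for the copies of A_{m-1} and the vertices v_i
  set tp : Fin m' → ℕ := fun jx => pos (2 * jx.1 + 1) with htp
  set vp : Fin (m' + 1) → ℕ := fun iv => pos (2 * iv.1) with hvp
  have hvt_piece' : ∀ iv : Fin (m' + 1), vt iv ∈ P (vp iv) := hvt_piece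
  have htp_lt_tp : ∀ i jx : Fin m', i.1 < jx.1 → tp i < tp jx := by
    intro i jx h
    exact hpos_mono _ _ (by omega) (by have := jx.2; omega)
  have hvp_lt_tp : ∀ (iv : Fin (m' + 1)) (jx : Fin m'), iv.1 ≤ jx.1 → vp iv < tp jx := by
    intro iv jx h
    exact hpos_mono _ _ (by omega) (by have := jx.2; omega)
  have htp_lt_vp : ∀ (jx : Fin m') (iv : Fin (m' + 1)), jx.1 < iv.1 → tp jx < vp iv := by
    intro jx iv h
    exact hpos_mono _ _ (by omega) (by have := iv.2; omega)
  have htp_full : ∀ jx : Fin m', c ≤ T.cliqueNumOn (P (tp jx)) := by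
    intro jx
    exact hfull _ (hpos_mono _ _ (by have := jx.2; omega) (by omega))
  -- a version of `hsub` with a computed index
  have hsub' : ∀ X : Set V, csmall ≤ T.cliqueNumOn X →
      ∃ f : AType m' → ↥X, Function.Injective f ∧
        ∀ u v : AType m', Aarc m' u v ↔ T.arc (f u).1 (f v).1 := by
    intro X hX
    obtain ⟨f, hf1, hf2⟩ := hsub X hX
    exact ⟨f, hf1, hf2⟩
  -- inductive construction of the copies of A_{m-1}
  have hstep : ∀ j : ℕ, j ≤ m' → ∃ φ : Fin m' → AType m' → V,
      (∀ i : Fin m', i.1 < j → ∀ t, φ i t ∈ P (tp i)) ∧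
      (∀ i : Fin m', i.1 < j → Function.Injective (φ i)) ∧
      (∀ i : Fin m', i.1 < j → ∀ t t', Aarc m' t t' ↔ T.arc (φ i t) (φ i t')) ∧
      (∀ i i' : Fin m', i.1 < i'.1 → i'.1 < j → ∀ t t', T.arc (φ i t) (φ i' t')) ∧
      (∀ i : Fin m', i.1 < j → ∀ (iv : Fin (m' + 1)) (t : AType m'),
        (iv.1 ≤ i.1 → T.arc (vt iv) (φ i t)) ∧ (i.1 < iv.1 → T.arc (φ i t) (vt iv))) := by
    intro j
    induction j with
    | zero =>
      intro _
      refine ⟨fun _ _ => vt 0, ?_, ?_, ?_, ?_, ?_⟩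
      · intro i hi; exact absurd hi (by omega)
      · intro i hi; exact absurd hi (by omega)
      · intro i hi; exact absurd hi (by omega)
      · intro i i' h1 h2; exact absurd h2 (by omega)
      · intro i hi; exact absurd hi (by omega)
    | succ j ih =>
      intro hj1
      obtain ⟨φ, hmem, hinj, hcopy, hTT, hvT⟩ := ih (by omega)
      set jj : Fin m' := ⟨j, by omega⟩ with hjj
      set F1 : Set V := ⋃ iv : Fin (m' + 1),
        (if iv.1 ≤ j then T.inN (vt iv) ∩ Later (bagOf (vt iv))
          else T.outN (vt iv) ∩ Earlier (bagOf (vt iv))) with hF1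
      set F2 : Set V := ⋃ p : Fin m' × AType m',
        (if p.1.1 < j then T.inN (φ p.1 p.2) ∩ Later (bagOf (φ p.1 p.2))
          else (∅ : Set V)) with hF2
      have hwF1 : T.cliqueNumOn F1 ≤ (m' + 1) * a := by
        have hb : F1 = ⋃ iv ∈ (Finset.univ : Finset (Fin (m' + 1))),
            (if iv.1 ≤ j then T.inN (vt iv) ∩ Later (bagOf (vt iv))
              else T.outN (vt iv) ∩ Earlier (bagOf (vt iv))) := by
          ext z
          simp [hF1]
        rw [hb]
        refine le_trans (T.cliqueNumOn_biUnion_le _ _ a ?_) ?_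
        · intro iv _
          split_ifs with h
          · exact (hvert' (vt iv) (hvtU iv)).1
          · exact (hvert' (vt iv) (hvtU iv)).2
        · simp [Finset.card_univ]
      have hwF2 : T.cliqueNumOn F2 ≤ (m' * Nat.card (AType m')) * a := by
        have hb : F2 = ⋃ p ∈ (Finset.univ : Finset (Fin m' × AType m')),
            (if p.1.1 < j then T.inN (φ p.1 p.2) ∩ Later (bagOf (φ p.1 p.2))
              else (∅ : Set V)) := by
          ext z
          simp [hF2]
        rw [hb]
        refine le_trans (T.cliqueNumOn_biUnion_le _ _ a ?_) ?_
        · intro p _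
          split_ifs with h
          · exact (hvert' (φ p.1 p.2) (hPU _ (hmem p.1 h p.2))).1
          · rw [T.cliqueNumOn_empty]; omega
        · have hcard : (Finset.univ : Finset (Fin m' × AType m')).card
              = m' * Nat.card (AType m') := by
            simp [Finset.card_univ, Nat.card_eq_fintype_card]
          rw [hcard]
      have hwF : T.cliqueNumOn (F1 ∪ F2) ≤ 2 * Nat.factorial (m' + 1) * a := by
        have h1 := T.cliqueNumOn_union_le F1 F2
        have h2 : (m' + 1) * a + (m' * Nat.card (AType m')) * a
            = Nat.card (AType (m' + 1)) * a := by
          rw [cardA_succ]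
          ring
        have h3 : Nat.card (AType (m' + 1)) * a ≤ 2 * Nat.factorial (m' + 1) * a :=
          Nat.mul_le_mul_right a (cardA_le (m' + 1))
        omega
      set X : Set V := P (tp jj) \ (F1 ∪ F2) with hX
      have hXw : csmall ≤ T.cliqueNumOn X := by
        have hdiff := T.cliqueNumOn_diff_ge (P (tp jj)) (F1 ∪ F2)
        have hfull' := htp_full jj
        rw [← hX] at hdiff
        omega
      obtain ⟨ψ, hψinj, hψarc⟩ := hsub' X hXw
      set φnew : AType m' → V := fun t => (ψ t).1 with hφnew
      have hnew_mem : ∀ t, φnew t ∈ P (tp jj) := fun t => ((ψ t).2).1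
      have hnew_notF : ∀ t, φnew t ∉ F1 ∪ F2 := fun t => ((ψ t).2).2
      have hnew_notF1 : ∀ t (iv : Fin (m' + 1)),
          φnew t ∉ (if iv.1 ≤ j then T.inN (vt iv) ∩ Later (bagOf (vt iv))
            else T.outN (vt iv) ∩ Earlier (bagOf (vt iv))) := by
        intro t iv h
        exact hnew_notF t (Or.inl (Set.mem_iUnion.mpr ⟨iv, h⟩))
      have hnew_notF2 : ∀ t (p : Fin m' × AType m'),
          φnew t ∉ (if p.1.1 < j then T.inN (φ p.1 p.2) ∩ Later (bagOf (φ p.1 p.2))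
            else (∅ : Set V)) := by
        intro t p h
        exact hnew_notF t (Or.inr (Set.mem_iUnion.mpr ⟨p, h⟩))
      have hnew_inj : Function.Injective φnew := fun t t' h => hψinj (Subtype.ext h)
      have hnew_arc : ∀ t t', Aarc m' t t' ↔ T.arc (φnew t) (φnew t') := fun t t' => hψarc t t'
      set φ' : Fin m' → AType m' → V := fun i => if i.1 = j then φnew else φ i with hφ'
      have hφ'new : φ' jj = φnew := by simp [hφ', hjj]
      have hφ'old : ∀ i : Fin m', i.1 < j → φ' i = φ i := by
        intro i hi
        simp [hφ', Nat.ne_of_lt hi]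
      refine ⟨φ', ?_, ?_, ?_, ?_, ?_⟩
      · intro i hi t
        by_cases hij : i.1 = j
        · have hieq : i = jj := Fin.ext hij
          rw [hieq, hφ'new]
          exact hnew_mem t
        · rw [hφ'old i (by omega)]
          exact hmem i (by omega) t
      · intro i hi
        by_cases hij : i.1 = j
        · have hieq : i = jj := Fin.ext hij
          rw [hieq, hφ'new]
          exact hnew_inj
        · rw [hφ'old i (by omega)]
          exact hinj i (by omega)
      · intro i hi t t'
        by_cases hij : i.1 = j
        · have hieq : i = jj := Fin.ext hij
          rw [hieq, hφ'new]
          exact hnew_arc t t'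
        · rw [hφ'old i (by omega)]
          exact hcopy i (by omega) t t'
      · intro i i' h1 h2 t t'
        by_cases hij' : i'.1 = j
        · have hi : i.1 < j := by omega
          have hieq : i' = jj := Fin.ext hij'
          rw [hieq, hφ'new, hφ'old i hi]
          apply harc_forward (φ i t) (φnew t') (tp i) (tp jj)
            (hmem i hi t) (hnew_mem t') (htp_lt_tp i jj (by simp [hjj]; omega))
          intro hbad
          have := hnew_notF2 t' (i, t)
          rw [if_pos hi] at this
          exact this hbad
        · rw [hφ'old i' (by omega), hφ'old i (by omega)]
          exact hTT i i' h1 (by omega) t t'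
      · intro i hi iv t
        by_cases hij : i.1 = j
        · have hieq : i = jj := Fin.ext hij
          rw [hieq, hφ'new]
          constructor
          · intro hiv
            apply harc_forward (vt iv) (φnew t) (vp iv) (tp jj)
              (hvt_piece' iv) (hnew_mem t) (hvp_lt_tp iv jj (by simp [hjj]; omega))
            intro hbad
            have := hnew_notF1 t iv
            rw [if_pos (by omega : iv.1 ≤ j)] at this
            exact this hbad
          · intro hiv
            apply harc_backward (vt iv) (φnew t) (vp iv) (tp jj)
              (hvt_piece' iv) (hnew_mem t) (htp_lt_vp jj iv (by simp [hjj]; omega))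
            intro hbad
            have := hnew_notF1 t iv
            rw [if_neg (by omega : ¬ iv.1 ≤ j)] at this
            exact this hbad
        · rw [hφ'old i (by omega)]
          exact hvT i (by omega) iv t
  -- assemble the copy of `A m`
  obtain ⟨φ, hmem, hinj, hcopy, hTT, hvT⟩ := hstep m' le_rfl
  apply hAfree
  set Φ : AType (m' + 1) → V :=
    Sum.elim (fun p : Fin m' × AType m' => φ p.1 p.2) (fun i => vt i) with hΦ
  have harc_iff : ∀ x y : AType (m' + 1), Aarc (m' + 1) x y ↔ T.arc (Φ x) (Φ y) := by
    rintro (⟨i, t⟩ | iv) (⟨i', t'⟩ | iv')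
    · show ((i : ℕ) < (i' : ℕ) ∨ (i = i' ∧ Aarc m' t t')) ↔ T.arc (φ i t) (φ i' t')
      rcases lt_trichotomy i.1 i'.1 with h | h | h
      · constructor
        · intro _; exact hTT i i' h i'.2 t t'
        · intro _; exact Or.inl h
      · have hieq : i = i' := Fin.ext h
        subst hieq
        constructor
        · rintro (h1 | ⟨_, h2⟩)
          · omega
          · exact (hcopy i i.2 t t').mp h2
        · intro h1
          exact Or.inr ⟨rfl, (hcopy i i.2 t t').mpr h1⟩
      · have harc := hTT i' i h i.2 t' t
        have hne : φ i t ≠ φ i' t' := by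
          intro heq
          rw [heq] at harc
          exact T.loopless _ harc
        constructor
        · rintro (h1 | ⟨h1, _⟩)
          · omega
          · exact absurd (congrArg Fin.val h1) (by omega)
        · intro h1
          exact absurd harc ((T.anti _ _ hne).mp h1)
    · show (i : ℕ) < (iv' : ℕ) ↔ T.arc (φ i t) (vt iv')
      constructor
      · intro h
        exact (hvT i i.2 iv' t).2 h
      · intro h1
        by_contra hno
        have h6 := (hvT i i.2 iv' t).1 (by omega)
        have hne : vt iv' ≠ φ i t := by
          intro heq
          rw [heq] at h6
          exact T.loopless _ h6
        exact (T.anti _ _ hne).mp h6 h1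
    · show (iv : ℕ) ≤ (i' : ℕ) ↔ T.arc (vt iv) (φ i' t')
      constructor
      · intro h
        exact (hvT i' i'.2 iv t').1 h
      · intro h1
        by_contra hno
        have h6 := (hvT i' i'.2 iv t').2 (by omega)
        have hne : φ i' t' ≠ vt iv := by
          intro heq
          rw [heq] at h6
          exact T.loopless _ h6
        exact (T.anti _ _ hne).mp h6 h1
    · show (iv' : ℕ) < (iv : ℕ) ↔ T.arc (vt iv) (vt iv')
      constructor
      · intro h
        exact hvarc iv' iv h
      · intro h1
        rcases lt_trichotomy iv.1 iv'.1 with h | h | h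
        · have h6 := hvarc iv iv' h
          have hne : vt iv ≠ vt iv' := by
            intro heq
            rw [heq] at h1
            exact T.loopless _ h1
          exact absurd h6 ((T.anti _ _ hne).mp h1)
        · have hieq : iv = iv' := Fin.ext h
          subst hieq
          exact absurd h1 (T.loopless _)
        · exact h
  refine ⟨Φ, ?_, harc_iff⟩
  intro x y hxy
  by_contra hne
  have harc2 : T.arc (Φ x) (Φ y) ∨ T.arc (Φ y) (Φ x) ∨ x = y := by
    rcases x with ⟨i, t⟩ | iv <;> rcases y with ⟨i', t'⟩ | iv'
    · rcases lt_trichotomy i.1 i'.1 with h | h | h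
      · exact Or.inl (hTT i i' h i'.2 t t')
      · have hieq : i = i' := Fin.ext h
        subst hieq
        by_cases ht : t = t'
        · exact Or.inr (Or.inr (by rw [ht]))
        · by_cases hA : Aarc m' t t'
          · exact Or.inl ((hcopy i i.2 t t').mp hA)
          · have hA' : Aarc m' t' t := by
              by_contra h2
              exact hA ((Aarc_anti m' t t' ht).mpr h2)
            exact Or.inr (Or.inl ((hcopy i i.2 t' t).mp hA'))
      · exact Or.inr (Or.inl (hTT i' i h i.2 t' t))
    · by_cases h : iv'.1 ≤ i.1
      · exact Or.inr (Or.inl ((hvT i i.2 iv' t).1 h))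
      · exact Or.inl ((hvT i i.2 iv' t).2 (by omega))
    · by_cases h : iv.1 ≤ i'.1
      · exact Or.inl ((hvT i' i'.2 iv t').1 h)
      · exact Or.inr (Or.inl ((hvT i' i'.2 iv t').2 (by omega)))
    · rcases lt_trichotomy iv.1 iv'.1 with h | h | h
      · exact Or.inr (Or.inl (hvarc iv iv' h))
      · exact Or.inr (Or.inr (by rw [Fin.ext h]))
      · exact Or.inl (hvarc iv' iv h)
  rcases harc2 with h | h | h
  · rw [hxy] at h
    exact T.loopless _ h
  · rw [hxy] at h
    exact T.loopless _ h
  · exact hne h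
end

section
/- For every n ∈ ℕ, the tournament D_n is A_3-free; that is, no subset of the vertices of D_n induces a subtournament isomorphic to A_3. -/
/-- Adjacency matrix of the 5-vertex obstruction `H` (a subtournament of `A 3`):
vertices `0 = x ∈ C₀`, `1 = y ∈ C₁`, `2 = r₀`, `3 = r₁`, `4 = r₂`. -/
def Hmat : Fin 5 → Fin 5 → Bool :=
  ![![false, true, false, true, true],
    ![false, false, false, false, true],
    ![true, true, false, false, false],
    ![false, true, true, false, false],
    ![false, false, true, true, false]]

/-- The part function of `DType (n+1) = X ⊕ (Y ⊕ Unit)`. -/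
def Dpart {n : ℕ} : DType (n + 1) → Fin 3
  | Sum.inl _ => 0
  | Sum.inr (Sum.inl _) => 1
  | Sum.inr (Sum.inr _) => 2

theorem Dpart_cross {n : ℕ} (u w : DType (n + 1)) (h : Dpart u ≠ Dpart w) :
    Darc (n + 1) u w ↔ ((Dpart w : ℕ) = ((Dpart u : ℕ) + 1) % 3) := by
  match u, w with
  | Sum.inl a, Sum.inl b => exact absurd rfl h
  | Sum.inl a, Sum.inr (Sum.inl b) => simp [Darc, Dpart]
  | Sum.inl a, Sum.inr (Sum.inr b) => simp [Darc, Dpart]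
  | Sum.inr (Sum.inl a), Sum.inl b => simp [Darc, Dpart]
  | Sum.inr (Sum.inl a), Sum.inr (Sum.inl b) => exact absurd rfl h
  | Sum.inr (Sum.inl a), Sum.inr (Sum.inr b) => simp [Darc, Dpart]
  | Sum.inr (Sum.inr a), Sum.inl b => simp [Darc, Dpart]
  | Sum.inr (Sum.inr a), Sum.inr (Sum.inl b) => simp [Darc, Dpart]
  | Sum.inr (Sum.inr a), Sum.inr (Sum.inr b) => exact absurd rfl h

set_option maxRecDepth 10000 in
/-- Finite check: any part-assignment of the vertices of `H` compatible with the
cyclic arc pattern between the three parts of `Δ(X, Y, v)` must be constant. -/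
theorem Hmat_key : ∀ h : Fin 5 → Fin 3,
    (∀ p q : Fin 5, h p ≠ h q → (Hmat p q = true ↔ (h q : ℕ) = ((h p : ℕ) + 1) % 3)) →
    h 1 = h 0 ∧ h 2 = h 0 ∧ h 3 = h 0 ∧ h 4 = h 0 := by decide

/-- The obstruction `H` embeds in no `D n`. -/
theorem no_H_in_D : ∀ n : ℕ, ∀ f : Fin 5 → DType n, Function.Injective f →
    (∀ p q : Fin 5, p ≠ q → (Hmat p q = true ↔ Darc n (f p) (f q))) → False := by
  intro n
  induction n with
  | zero => intro f _ _; exact (f 0).elim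
  | succ n ih =>
    intro f finj harc
    set h : Fin 5 → Fin 3 := fun p => Dpart (f p) with hh
    have hcross : ∀ p q : Fin 5, h p ≠ h q →
        (Hmat p q = true ↔ (h q : ℕ) = ((h p : ℕ) + 1) % 3) := by
      intro p q hpq
      have hne : p ≠ q := fun e => hpq (by rw [e])
      rw [harc p q hne]
      exact Dpart_cross (f p) (f q) hpq
    obtain ⟨h1, h2, h3, h4⟩ := Hmat_key h hcross
    have hall : ∀ p : Fin 5, h p = h 0 := by
      intro p; fin_cases p <;> simp_all
    -- case on the common part
    rcases e0 : h 0 with ⟨c, hc⟩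
    interval_cases c
    · -- all in X
      have hx : ∀ p : Fin 5, ∃ a : DType n, f p = Sum.inl a := by
        intro p
        have : Dpart (f p) = (0 : Fin 3) := by
          have := hall p; rw [e0] at this; exact this
        match hfp : f p with
        | Sum.inl a => exact ⟨a, rfl⟩
        | Sum.inr (Sum.inl a) => rw [hfp] at this; simp [Dpart] at this
        | Sum.inr (Sum.inr a) => rw [hfp] at this; simp [Dpart] at this
      choose e he using hx
      refine ih e (fun p q hpq => ?_) (fun p q hne => ?_)
      · apply finj; rw [he p, he q, hpq]
      · rw [harc p q hne, he p, he q]; exact Iff.rfl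
    · -- all in Y
      have hx : ∀ p : Fin 5, ∃ a : DType n, f p = Sum.inr (Sum.inl a) := by
        intro p
        have : Dpart (f p) = (1 : Fin 3) := by
          have := hall p; rw [e0] at this; exact this
        match hfp : f p with
        | Sum.inl a => rw [hfp] at this; simp [Dpart] at this
        | Sum.inr (Sum.inl a) => exact ⟨a, rfl⟩
        | Sum.inr (Sum.inr a) => rw [hfp] at this; simp [Dpart] at this
      choose e he using hx
      refine ih e (fun p q hpq => ?_) (fun p q hne => ?_)
      · apply finj; rw [he p, he q, hpq]
      · rw [harc p q hne, he p, he q]; exact Iff.rfl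
    · -- all equal to the single extra vertex: contradicts injectivity
      have hx : ∀ p : Fin 5, f p = Sum.inr (Sum.inr ()) := by
        intro p
        have : Dpart (f p) = (2 : Fin 3) := by
          have := hall p; rw [e0] at this; exact this
        match hfp : f p with
        | Sum.inl a => rw [hfp] at this; simp [Dpart] at this
        | Sum.inr (Sum.inl a) => rw [hfp] at this; simp [Dpart] at this
        | Sum.inr (Sum.inr a) => cases a; rfl
      have : (0 : Fin 5) = 1 := finj (by rw [hx 0, hx 1])
      simp at this

/-- The five chosen vertices of `A 3` inducing a copy of `H`. -/
def wH : Fin 5 → AType 3 :=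
  ![Sum.inl (0, Sum.inr 0), Sum.inl (1, Sum.inr 0), Sum.inr 0, Sum.inr 1, Sum.inr 2]

instance ATypeDecEq : (n : ℕ) → DecidableEq (AType n)
  | 0 => inferInstanceAs (DecidableEq Empty)
  | n + 1 =>
    have := ATypeDecEq n
    inferInstanceAs (DecidableEq ((Fin n × AType n) ⊕ Fin (n + 1)))

instance AarcDec : (n : ℕ) → (x y : AType n) → Decidable (Aarc n x y)
  | 0, x, _ => x.elim
  | n + 1, Sum.inl (i, a), Sum.inl (j, b) =>
    have := AarcDec n a b
    inferInstanceAs (Decidable ((i : ℕ) < (j : ℕ) ∨ (i = j ∧ Aarc n a b)))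
  | _ + 1, Sum.inl (j, _), Sum.inr i => inferInstanceAs (Decidable ((j : ℕ) < (i : ℕ)))
  | _ + 1, Sum.inr i, Sum.inl (j, _) => inferInstanceAs (Decidable ((i : ℕ) ≤ (j : ℕ)))
  | _ + 1, Sum.inr i, Sum.inr j => inferInstanceAs (Decidable ((j : ℕ) < (i : ℕ)))

theorem wH_inj : Function.Injective wH := by decide

theorem wH_arc : ∀ p q : Fin 5, p ≠ q → (Hmat p q = true ↔ Aarc 3 (wH p) (wH q)) := by
  decide

open Tournament in
/-- For every `n`, the tournament `D n` contains no copy of `A 3`. -/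
theorem stmt_18 (n : ℕ) : ¬ (Dtour n).HasCopy (Atour 3) := by
  rintro ⟨f, finj, hf⟩
  refine no_H_in_D n (f ∘ wH) (finj.comp wH_inj) (fun p q hne => ?_)
  simp only [Function.comp]
  rw [wH_arc p q hne]
  exact hf (wH p) (wH q)
end
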